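/- Let v : [0,T] → ℝ be bounded and measurable, and suppose for every δ̄ > 0 the function v is piecewise continuous on [0,T] except on the union of finitely many open intervals of total length at most δ̄. For a uniform partition t₁ = 0 < t₂ < … < t_N = T let L_N be the piecewise linear interpolant with nodes (t_i, v(t_i)). Then for every ε > 0 there exists N̄(ε) such that for all N > N̄(ε), ∫₀ᵀ (L_N(t) − v(t))² dt ≤ ε. -/

import Mathlib

open Set MeasureTheory

/-- Piecewise linear interpolant of `v` on the uniform grid of `N` nodes
`tᵢ = (i-1)·T/(N-1)`, `i = 1, …, N`, on `[0, T]`. -/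
noncomputable def uniformLinearInterp (v : ℝ → ℝ) (T : ℝ) (N : ℕ) (t : ℝ) : ℝ :=
  let h : ℝ := T / ((N : ℝ) - 1)
  let i : ℕ := ⌊t / h⌋.toNat
  v (i * h) + (v ((i + 1 : ℕ) * h) - v (i * h)) * (t - i * h) / h


private lemma ulin_aux_good (va vb vt θ e : ℝ) (hθ0 : 0 ≤ θ) (hθ1 : θ ≤ 1)
    (h1 : |vt - va| < e) (h2 : |vb - va| < e) :
    (va + (vb - va) * θ - vt) ^ 2 ≤ (2 * e) ^ 2 := by
  have h1' := abs_lt.1 h1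
  have h2' := abs_lt.1 h2
  have hE1 : va + (vb - va) * θ - vt ≤ 2 * e := by
    nlinarith [mul_nonneg (show (0:ℝ) ≤ e - (vb - va) by linarith) hθ0,
      mul_nonneg (show (0:ℝ) ≤ θ by linarith) (show (0:ℝ) ≤ e - (vb - va) by linarith)]
  have hE2 : -(2 * e) ≤ va + (vb - va) * θ - vt := by
    nlinarith [mul_nonneg (show (0:ℝ) ≤ e + (vb - va) by linarith) hθ0]
  exact sq_le_sq' hE2 hE1

private lemma ulin_aux_bad (va vb vt θ C : ℝ) (hθ0 : 0 ≤ θ) (hθ1 : θ ≤ 1)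
    (ha : |va| ≤ C) (hb : |vb| ≤ C) (ht : |vt| ≤ C) :
    (va + (vb - va) * θ - vt) ^ 2 ≤ 4 * C ^ 2 := by
  have ha' := abs_le.1 ha
  have hb' := abs_le.1 hb
  have ht' := abs_le.1 ht
  have hE1 : va + (vb - va) * θ - vt ≤ 2 * C := by
    nlinarith [mul_nonneg (show (0:ℝ) ≤ C - va by linarith) (show (0:ℝ) ≤ 1 - θ by linarith),
      mul_nonneg (show (0:ℝ) ≤ C - vb by linarith) hθ0]
  have hE2 : -(2 * C) ≤ va + (vb - va) * θ - vt := by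
    nlinarith [mul_nonneg (show (0:ℝ) ≤ C + va by linarith) (show (0:ℝ) ≤ 1 - θ by linarith),
      mul_nonneg (show (0:ℝ) ≤ C + vb by linarith) hθ0]
  have := sq_le_sq' hE2 hE1
  nlinarith [this]

private lemma ulin_aux_final (C ε δ h : ℝ) (m : ℕ) (hC : 0 ≤ C) (hε : 0 < ε)
    (hδ : δ = ε / (48 * (C ^ 2 + 1))) (hh : 0 < h)
    (hhle : h ≤ ε / (32 * (C ^ 2 + 1) * ((m : ℝ) + 1))) :
    ε / 2 + 4 * C ^ 2 * (3 * δ + 2 * m * h) ≤ ε := by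
  have hδle : 48 * (C ^ 2 + 1) * δ = ε := by
    rw [hδ]; field_simp
  have hA : 4 * C ^ 2 * (3 * δ) ≤ ε / 4 := by
    nlinarith [mul_nonneg (sq_nonneg C) (show (0:ℝ) ≤ δ by nlinarith [sq_nonneg C])]
  have hB : 4 * C ^ 2 * (2 * (m : ℝ) * h) ≤ ε / 4 := by
    have e1 : 4 * C ^ 2 * (2 * (m : ℝ) * h) ≤ 8 * (C ^ 2 + 1) * ((m : ℝ) + 1) * h := by
      nlinarith [mul_nonneg (show (0:ℝ) ≤ 8 * (C ^ 2 + 1) * ((m:ℝ)+1) - 8 * C ^ 2 * (m:ℝ) by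
        nlinarith [sq_nonneg C, Nat.cast_nonneg (α := ℝ) m]) hh.le]
    have e2 : 8 * (C ^ 2 + 1) * ((m : ℝ) + 1) * h
        ≤ 8 * (C ^ 2 + 1) * ((m : ℝ) + 1) * (ε / (32 * (C ^ 2 + 1) * ((m : ℝ) + 1))) :=
      mul_le_mul_of_nonneg_left hhle (by positivity)
    have e3 : 8 * (C ^ 2 + 1) * ((m : ℝ) + 1) * (ε / (32 * (C ^ 2 + 1) * ((m : ℝ) + 1)))
        = ε / 4 := by
      have hne1 : (C ^ 2 + 1 : ℝ) ≠ 0 := by positivity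
      have hne2 : ((m : ℝ) + 1) ≠ 0 := by positivity
      field_simp
      ring
    linarith
  linarith

set_option maxHeartbeats 1000000 in
/-- If `v ∈ L^∞[0,T]` is, for every `δ̄ > 0`, piecewise continuous on `[0,T]` outside a
finite union of open intervals of total length at most `δ̄`, then the piecewise linear
interpolants on uniform grids converge to `v` in `L²[0,T]`: for each `ε > 0` there is
`N̄(ε)` with `∫₀ᵀ (L_N - v)² ≤ ε` for all `N > N̄(ε)`. -/
theorem uniformLinearInterp_L2_convergence
    (T : ℝ) (hT : 0 < T) (v : ℝ → ℝ)
    (hmeas : Measurable v)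
    (hbdd : ∃ C : ℝ, ∀ t ∈ Icc 0 T, |v t| ≤ C)
    (hpc : ∀ δ : ℝ, 0 < δ → ∃ (r : ℕ) (c d : Fin r → ℝ) (P : Finset ℝ),
      (∀ j, c j ≤ d j) ∧
      (∑ j, (d j - c j)) ≤ δ ∧
      ∀ t ∈ (Icc 0 T \ ⋃ j, Ioo (c j) (d j)) \ (P : Set ℝ), ContinuousAt v t) :
    ∀ ε : ℝ, 0 < ε → ∃ Nbar : ℕ, ∀ N : ℕ, N > Nbar →
      ∫ t in (0:ℝ)..T, (uniformLinearInterp v T N t - v t) ^ 2 ≤ ε := by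
  obtain ⟨C, hC⟩ := hbdd
  have hC0 : 0 ≤ C := le_trans (abs_nonneg _) (hC 0 ⟨le_refl 0, hT.le⟩)
  intro ε hε
  obtain ⟨δ, hδdef⟩ : ∃ x : ℝ, x = ε / (48 * (C ^ 2 + 1)) := ⟨_, rfl⟩
  have hδpos : 0 < δ := by rw [hδdef]; positivity
  obtain ⟨r, c, d, P, hcd, hsum, hcont⟩ := hpc δ hδpos
  obtain ⟨s, hsdef⟩ : ∃ x : ℕ, x = P.card := ⟨_, rfl⟩
  obtain ⟨η, hηdef⟩ : ∃ x : ℝ, x = δ / (s + 1) := ⟨_, rfl⟩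
  have hηpos : 0 < η := by rw [hηdef]; positivity
  have hsη : (s : ℝ) * η ≤ δ := by
    rw [hηdef, mul_div_assoc', div_le_iff₀ (by positivity)]
    nlinarith only [Nat.cast_nonneg (α := ℝ) s, hδpos.le]
  obtain ⟨K, hKdef⟩ : ∃ x : Set ℝ,
      x = (Icc 0 T \ ⋃ j, Ioo (c j) (d j)) \ ⋃ p ∈ P, Ioo (p - η) (p + η) := ⟨_, rfl⟩
  have hKcompact : IsCompact K := by
    rw [hKdef]
    apply IsCompact.diff
    · exact isCompact_Icc.diff (isOpen_iUnion fun j => isOpen_Ioo)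
    · exact isOpen_biUnion fun p _ => isOpen_Ioo
  have hKcont : ContinuousOn v K := by
    rw [hKdef]
    intro x hx
    have hxP : x ∉ (P : Set ℝ) := by
      intro hxP
      exact hx.2 (mem_biUnion hxP ⟨by linarith, by linarith⟩)
    exact (hcont x ⟨hx.1, hxP⟩).continuousWithinAt
  obtain ⟨ε'', hε''def⟩ : ∃ x : ℝ, x = Real.sqrt (ε / (8 * T)) := ⟨_, rfl⟩
  have hε''pos : 0 < ε'' := by
    rw [hε''def]; exact Real.sqrt_pos.2 (by positivity)
  have hε''sq : ε'' ^ 2 = ε / (8 * T) := by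
    rw [hε''def]; exact Real.sq_sqrt (by positivity)
  obtain ⟨δ', hδ'pos, hδ'⟩ := Metric.uniformContinuousOn_iff.1
    (hKcompact.uniformContinuousOn_of_continuous hKcont) ε'' hε''pos
  obtain ⟨m, hmdef⟩ : ∃ x : ℕ, x = r + s := ⟨_, rfl⟩
  obtain ⟨h0, hh0def⟩ : ∃ x : ℝ,
      x = min δ' (ε / (32 * (C ^ 2 + 1) * ((m : ℝ) + 1))) := ⟨_, rfl⟩
  have hh0pos : 0 < h0 := by
    rw [hh0def]; exact lt_min hδ'pos (by positivity)
  have hh0δ' : h0 ≤ δ' := by rw [hh0def]; exact min_le_left _ _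
  have hh0ε : h0 ≤ ε / (32 * (C ^ 2 + 1) * ((m : ℝ) + 1)) := by
    rw [hh0def]; exact min_le_right _ _
  refine ⟨⌈T / h0⌉₊ + 1, fun N hN => ?_⟩
  have hN2 : 2 ≤ N := by omega
  obtain ⟨n, hndef⟩ : ∃ x : ℝ, x = (N : ℝ) - 1 := ⟨_, rfl⟩
  have hn1 : (1 : ℝ) ≤ n := by
    have h1 : (2 : ℝ) ≤ (N : ℝ) := by exact_mod_cast hN2
    rw [hndef]; linarith
  have hnpos : 0 < n := by linarith
  obtain ⟨h, hhdef⟩ : ∃ x : ℝ, x = T / n := ⟨_, rfl⟩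
  have hhpos : 0 < h := by rw [hhdef]; exact div_pos hT hnpos
  have hnh : n * h = T := by
    rw [hhdef, mul_comm]; exact div_mul_cancel₀ T hnpos.ne'
  have hhlt : h < h0 := by
    have h2 : T / h0 ≤ (⌈T / h0⌉₊ : ℝ) := Nat.le_ceil _
    have h3 : (⌈T / h0⌉₊ : ℝ) + 1 ≤ n := by
      rw [hndef]
      have h4 : (⌈T / h0⌉₊ + 2 : ℕ) ≤ N := by omega
      have h5 := (Nat.cast_le (α := ℝ)).2 h4
      push_cast at h5
      linarith
    rw [hhdef, div_lt_iff₀ hnpos]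
    have h4 : T / h0 < n := by linarith
    have h5 : T < n * h0 := (div_lt_iff₀ hh0pos).1 h4
    linarith [mul_comm n h0]
  have hhδ' : h < δ' := lt_of_lt_of_le hhlt hh0δ'
  have hhε : h ≤ ε / (32 * (C ^ 2 + 1) * ((m : ℝ) + 1)) := le_trans hhlt.le hh0ε
  -- the enlarged bad set
  obtain ⟨U, hUdef⟩ : ∃ x : Set ℝ,
      x = (⋃ j, Ioo (c j - h) (d j + h)) ∪ ⋃ p ∈ P, Ioo (p - (η + h)) (p + (η + h)) := ⟨_, rfl⟩
  have hUmeas : MeasurableSet U := by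
    rw [hUdef]
    exact (MeasurableSet.iUnion fun j => measurableSet_Ioo).union
      (P.measurableSet_biUnion fun p _ => measurableSet_Ioo)
  have hA : volume (⋃ j, Ioo (c j - h) (d j + h)) ≤ ENNReal.ofReal (δ + 2 * r * h) := by
    calc volume (⋃ j, Ioo (c j - h) (d j + h))
        ≤ ∑ j, volume (Ioo (c j - h) (d j + h)) := measure_iUnion_fintype_le _ _
      _ = ∑ j, ENNReal.ofReal ((d j - c j) + 2 * h) := by
          refine Finset.sum_congr rfl fun j _ => ?_
          rw [Real.volume_Ioo]; congr 1; ring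
      _ = ENNReal.ofReal (∑ j, ((d j - c j) + 2 * h)) := by
          rw [ENNReal.ofReal_sum_of_nonneg]
          intro j _
          have := hcd j; linarith
      _ ≤ ENNReal.ofReal (δ + 2 * r * h) := by
          apply ENNReal.ofReal_le_ofReal
          rw [Finset.sum_add_distrib]
          simp only [Finset.sum_const, Finset.card_univ, Fintype.card_fin, nsmul_eq_mul]
          linarith
  have hB : volume (⋃ p ∈ P, Ioo (p - (η + h)) (p + (η + h)))
      ≤ ENNReal.ofReal (2 * δ + 2 * s * h) := by
    calc volume (⋃ p ∈ P, Ioo (p - (η + h)) (p + (η + h)))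
        ≤ ∑ p ∈ P, volume (Ioo (p - (η + h)) (p + (η + h))) := measure_biUnion_finset_le _ _
      _ = ∑ p ∈ P, ENNReal.ofReal (2 * (η + h)) := by
          refine Finset.sum_congr rfl fun p _ => ?_
          rw [Real.volume_Ioo]; congr 1; ring
      _ = ENNReal.ofReal ((s : ℝ) * (2 * (η + h))) := by
          rw [Finset.sum_const, ← hsdef, nsmul_eq_mul,
            ENNReal.ofReal_mul (by positivity : (0:ℝ) ≤ (s : ℝ)), ENNReal.ofReal_natCast]
      _ ≤ ENNReal.ofReal (2 * δ + 2 * s * h) := by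
          apply ENNReal.ofReal_le_ofReal
          nlinarith only [hsη, Nat.cast_nonneg (α := ℝ) s, hhpos.le]
  have hμU : volume U ≤ ENNReal.ofReal (3 * δ + 2 * m * h) := by
    rw [hUdef]
    refine le_trans (measure_union_le _ _) (le_trans (add_le_add hA hB) ?_)
    rw [← ENNReal.ofReal_add (by positivity) (by positivity)]
    apply ENNReal.ofReal_le_ofReal
    rw [hmdef]; push_cast; nlinarith only [hhpos.le]
  obtain ⟨g, hgdef⟩ : ∃ x : ℝ → ℝ,
      x = fun t => ε / (2 * T) + 4 * C ^ 2 * U.indicator (fun _ => (1 : ℝ)) t := ⟨_, rfl⟩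
  -- the key pointwise bound
  have key : ∀ t ∈ Ioo (0:ℝ) T, (uniformLinearInterp v T N t - v t) ^ 2 ≤ g t := by
    intro t ht
    obtain ⟨ht0, htT⟩ := ht
    obtain ⟨i, hidef⟩ : ∃ x : ℕ, x = ⌊t / h⌋.toNat := ⟨_, rfl⟩
    have hicast : ((i : ℤ) : ℝ) = ((⌊t / h⌋ : ℤ) : ℝ) := by
      rw [hidef, Int.toNat_of_nonneg (Int.floor_nonneg.2 (div_nonneg ht0.le hhpos.le))]
    have hia : (i : ℝ) ≤ t / h := by
      rw [show ((i : ℕ) : ℝ) = ((i : ℤ) : ℝ) by push_cast; ring, hicast]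
      exact Int.floor_le _
    have hib : t / h < (i : ℝ) + 1 := by
      rw [show ((i : ℕ) : ℝ) = ((i : ℤ) : ℝ) by push_cast; ring, hicast]
      exact Int.lt_floor_add_one _
    obtain ⟨a, hadef⟩ : ∃ x : ℝ, x = (i : ℝ) * h := ⟨_, rfl⟩
    obtain ⟨b, hbdef⟩ : ∃ x : ℝ, x = ((i : ℝ) + 1) * h := ⟨_, rfl⟩
    have hat : a ≤ t := by
      rw [hadef]; exact (le_div_iff₀ hhpos).1 hia
    have htb : t < b := by
      rw [hbdef]; exact (div_lt_iff₀ hhpos).1 hib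
    have ha0 : 0 ≤ a := by
      rw [hadef]; exact mul_nonneg (Nat.cast_nonneg i) hhpos.le
    have hbT : b ≤ T := by
      have h1 : (i : ℝ) < n := by
        have hTn : t / h < n := (div_lt_iff₀ hhpos).2 (by rw [hnh]; exact htT)
        exact lt_of_le_of_lt hia hTn
      have h2 : (i : ℝ) + 1 ≤ n := by
        have hcast : ((N - 1 : ℕ) : ℝ) = n := by
          rw [hndef, Nat.cast_sub (by omega)]; simp
        have h3 : (i : ℝ) < ((N - 1 : ℕ) : ℝ) := by rw [hcast]; exact h1
        have h4 : i < N - 1 := by exact_mod_cast h3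
        have h5 : i + 1 ≤ N - 1 := h4
        have h6 := (Nat.cast_le (α := ℝ)).2 h5
        rw [hcast] at h6; push_cast at h6; linarith
      calc b = ((i : ℝ) + 1) * h := hbdef
      _ ≤ n * h := mul_le_mul_of_nonneg_right h2 hhpos.le
      _ = T := hnh
    have hba : b = a + h := by rw [hbdef, hadef]; ring
    have hinterp : uniformLinearInterp v T N t = v a + (v b - v a) * (t - a) / h := by
      show v ((⌊t / (T / ((N:ℝ)-1))⌋.toNat : ℝ) * (T / ((N:ℝ)-1))) + _ = _
      have hTn : T / ((N : ℝ) - 1) = h := by rw [hhdef, hndef]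
      rw [hTn, ← hidef, hadef, hbdef]
      push_cast
      ring_nf
    obtain ⟨θ, hθdef⟩ : ∃ x : ℝ, x = (t - a) / h := ⟨_, rfl⟩
    have hθ0 : 0 ≤ θ := by
      rw [hθdef]; exact div_nonneg (by linarith) hhpos.le
    have hθ1 : θ ≤ 1 := by
      rw [hθdef, div_le_one hhpos]; linarith [htb, hba]
    have hmd : (v b - v a) * (t - a) / h = (v b - v a) * θ := by
      rw [hθdef]; ring
    rw [hinterp, hmd]
    by_cases hgood : Icc a b ⊆ K
    · -- good cell : uniform continuity bound
      have hmema : a ∈ K := hgood ⟨le_refl a, by linarith⟩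
      have hmemt : t ∈ K := hgood ⟨hat, by linarith⟩
      have hmemb : b ∈ K := hgood ⟨by linarith, le_refl b⟩
      have e1 : |v t - v a| < ε'' := by
        have h7 := hδ' t hmemt a hmema (by
          rw [Real.dist_eq, abs_of_nonneg (by linarith)]
          linarith [hhδ', htb, hba])
        rwa [Real.dist_eq] at h7
      have e2 : |v b - v a| < ε'' := by
        have h7 := hδ' b hmemb a hmema (by
          rw [Real.dist_eq, abs_of_nonneg (by linarith)]
          linarith [hhδ'])
        rwa [Real.dist_eq] at h7
      have hsq : (v a + (v b - v a) * θ - v t) ^ 2 ≤ (2 * ε'') ^ 2 :=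
        ulin_aux_good (v a) (v b) (v t) θ ε'' hθ0 hθ1 e1 e2
      have hval : (2 * ε'') ^ 2 = ε / (2 * T) := by
        have h4 : (2 * ε'') ^ 2 = 4 * ε'' ^ 2 := by ring
        have hT' : T ≠ 0 := hT.ne'
        rw [h4, hε''sq]
        field_simp
        ring
      have hind : 0 ≤ U.indicator (fun _ => (1:ℝ)) t := by
        apply Set.indicator_nonneg; intro _ _; norm_num
      have h5 : 0 ≤ 4 * C ^ 2 * U.indicator (fun _ => (1:ℝ)) t :=
        mul_nonneg (by positivity) hind
      rw [hgdef]
      linarith only [hsq, hval, h5]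
    · -- bad cell : t belongs to U
      obtain ⟨x, hx, hxK⟩ := not_subset.1 hgood
      have hxIcc : x ∈ Icc 0 T := ⟨le_trans ha0 hx.1, le_trans hx.2 hbT⟩
      rw [hKdef] at hxK
      have hxmem : x ∈ (⋃ j, Ioo (c j) (d j)) ∨ x ∈ ⋃ p ∈ P, Ioo (p - η) (p + η) := by
        by_contra hcon
        push_neg at hcon
        exact hxK ⟨⟨hxIcc, hcon.1⟩, hcon.2⟩
      have htU : t ∈ U := by
        rw [hUdef]
        rcases hxmem with hx1 | hx2
        · obtain ⟨j, hj⟩ := mem_iUnion.1 hx1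
          apply mem_union_left
          apply mem_iUnion.2 ⟨j, ?_⟩
          constructor
          · linarith [hx.2, hj.1, hba, hat]
          · linarith [hx.1, hj.2, hba, htb]
        · obtain ⟨p, hpP, hpx⟩ := mem_iUnion₂.1 hx2
          apply mem_union_right
          apply mem_biUnion hpP
          constructor
          · linarith [hpx.1, hx.2, hba, hat]
          · linarith [hpx.2, hx.1, hba, htb]
      have hI : U.indicator (fun _ => (1:ℝ)) t = 1 := Set.indicator_of_mem htU _
      have hvt : |v t| ≤ C := hC t ⟨ht0.le, htT.le⟩
      have hva : |v a| ≤ C := hC a ⟨ha0, by linarith⟩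
      have hvb : |v b| ≤ C := hC b ⟨by linarith, hbT⟩
      have hsq : (v a + (v b - v a) * θ - v t) ^ 2 ≤ 4 * C ^ 2 :=
        ulin_aux_bad (v a) (v b) (v t) θ C hθ0 hθ1 hva hvb hvt
      rw [hgdef]
      simp only [hI]
      have h6 : 0 ≤ ε / (2 * T) := by positivity
      linarith only [hsq, h6]
  -- now the integral estimate
  rw [intervalIntegral.integral_of_le hT.le]
  have hae : ∀ᵐ t ∂(volume.restrict (Ioc 0 T)),
      (uniformLinearInterp v T N t - v t) ^ 2 ≤ g t := by
    have h1 : ∀ᵐ t ∂(volume.restrict (Ioc 0 T)), t ∈ Ioc 0 T :=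
      ae_restrict_mem measurableSet_Ioc
    have h2 : ∀ᵐ t ∂(volume.restrict (Ioc 0 T)), t ≠ T := by
      refine ae_restrict_of_ae ?_
      rw [ae_iff]
      have h3 : {a : ℝ | ¬ a ≠ T} = {T} := by ext x; simp
      rw [h3]
      exact measure_singleton T
    filter_upwards [h1, h2] with t ht hne
    exact key t ⟨ht.1, lt_of_le_of_ne ht.2 hne⟩
  have hIocvol : volume (Ioc (0:ℝ) T) < ⊤ := by
    rw [Real.volume_Ioc]; exact ENNReal.ofReal_lt_top
  have hconst_int : Integrable (fun _ : ℝ => ε / (2 * T)) (volume.restrict (Ioc 0 T)) := by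
    exact integrableOn_const hIocvol.ne
  have hind_int : Integrable (fun t : ℝ => 4 * C ^ 2 * U.indicator (fun _ => (1:ℝ)) t)
      (volume.restrict (Ioc 0 T)) := by
    apply Integrable.const_mul
    apply Integrable.indicator _ hUmeas
    exact integrableOn_const hIocvol.ne
  have hgint : Integrable g (volume.restrict (Ioc 0 T)) := by
    rw [hgdef]; exact hconst_int.add hind_int
  have hmono : ∫ t in Ioc (0:ℝ) T, (uniformLinearInterp v T N t - v t) ^ 2
      ≤ ∫ t in Ioc (0:ℝ) T, g t :=
    integral_mono_of_nonneg (ae_of_all _ fun t => sq_nonneg _) hgint hae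
  have hgval : ∫ t in Ioc (0:ℝ) T, g t ≤ ε / 2 + 4 * C ^ 2 * (3 * δ + 2 * m * h) := by
    rw [hgdef]
    rw [integral_add hconst_int hind_int]
    have hc : ∫ _ in Ioc (0:ℝ) T, ε / (2 * T) = ε / 2 := by
      rw [setIntegral_const, measureReal_def, Real.volume_Ioc, smul_eq_mul, ENNReal.toReal_ofReal (by linarith)]
      have hT' : T ≠ 0 := hT.ne'
      field_simp
      ring
    have hi : ∫ t in Ioc (0:ℝ) T, 4 * C ^ 2 * U.indicator (fun _ => (1:ℝ)) t
        ≤ 4 * C ^ 2 * (3 * δ + 2 * m * h) := by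
      rw [integral_const_mul]
      have h1 : ∫ t in Ioc (0:ℝ) T, U.indicator (fun _ => (1:ℝ)) t
          = (volume (Ioc (0:ℝ) T ∩ U)).toReal := by
        rw [setIntegral_indicator hUmeas, setIntegral_const, smul_eq_mul, mul_one, measureReal_def]
      have h2 : (volume (Ioc (0:ℝ) T ∩ U)).toReal ≤ 3 * δ + 2 * m * h := by
        apply ENNReal.toReal_le_of_le_ofReal (by positivity)
        exact le_trans (measure_mono inter_subset_right) hμU
      rw [h1]
      have h3 : (0:ℝ) ≤ 4 * C ^ 2 := by positivity
      exact mul_le_mul_of_nonneg_left h2 h3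
    rw [hc]
    linarith
  have hfinal : ε / 2 + 4 * C ^ 2 * (3 * δ + 2 * m * h) ≤ ε :=
    ulin_aux_final C ε δ h m hC0 hε hδdef hhpos hhε
  linarith only [hmono, hgval, hfinal]
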